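/- Let β ∈ (0,1], let λ ∈ Γ, and let r ∈ {1,…,m} be an index with λ_r < 0. If f_i(λ) ≥ β ∑_{j=1}^m f_j(λ) for every i = 1,…,m, then f_r(λ)λ_r² ≤ ((m−1)/β) ∑_{i ≠ r} f_i(λ)λ_i². -/

import Mathlib

open Filter Topology

/-- The `i`-th partial derivative `fᵢ(x) = ∂f/∂λᵢ(x)`. -/
noncomputable def pd {m : ℕ} (f : (Fin m → ℝ) → ℝ) (x : Fin m → ℝ) (i : Fin m) : ℝ :=
  fderiv ℝ f x (Pi.single i 1)

/-- The Euclidean norm of a vector in `ℝ^m`. -/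
noncomputable def eNorm {m : ℕ} (v : Fin m → ℝ) : ℝ :=
  Real.sqrt (∑ i, (v i) ^ 2)

/-- The unit normal `ν_x = Df(x)/|Df(x)|`. -/
noncomputable def nuv {m : ℕ} (f : (Fin m → ℝ) → ℝ) (x : Fin m → ℝ) : Fin m → ℝ :=
  fun i => pd f x i / eNorm (pd f x)

/-- A symmetric open convex cone containing the positive cone and not all of `ℝ^m`
lies in the half-space `∑ λᵢ > 0`. -/
lemma sum_pos_of_mem_cone (m : ℕ) (hm : 2 ≤ m)
    (Γ : Set (Fin m → ℝ))
    (hΓopen : IsOpen Γ) (hΓconv : Convex ℝ Γ)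
    (hΓproper : Γ ≠ Set.univ)
    (hΓcone : ∀ t : ℝ, 0 < t → ∀ x ∈ Γ, t • x ∈ Γ)
    (hΓperm : ∀ π : Equiv.Perm (Fin m), ∀ x ∈ Γ, x ∘ π ∈ Γ)
    (hΓpos : {x : Fin m → ℝ | ∀ i, 0 < x i} ⊆ Γ)
    (lam : Fin m → ℝ) (hlam : lam ∈ Γ) : 0 < ∑ i, lam i := by
  haveI : NeZero m := ⟨by omega⟩
  by_contra hcon
  push_neg at hcon
  -- Γ is closed under addition
  have hadd : ∀ u ∈ Γ, ∀ v ∈ Γ, u + v ∈ Γ := by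
    intro u hu v hv
    have h2 := hΓconv hu hv (by norm_num : (0:ℝ) ≤ 1/2) (by norm_num : (0:ℝ) ≤ 1/2)
      (by norm_num)
    have h3 := hΓcone 2 (by norm_num) _ h2
    have : (2:ℝ) • ((1/2 : ℝ) • u + (1/2 : ℝ) • v) = u + v := by
      rw [smul_add, smul_smul, smul_smul]; norm_num
    rwa [this] at h3
  -- the averaged vector `a = s • 1`
  set s : ℝ := (∑ j, lam j) / m with hs
  have hsle : s ≤ 0 := div_nonpos_of_nonpos_of_nonneg hcon (Nat.cast_nonneg m)
  have ha : (fun _ : Fin m => s) ∈ Γ := by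
    have hmem : ∀ k : Fin m, (fun i => lam (i + k)) ∈ Γ := by
      intro k
      exact hΓperm (Equiv.addRight k) lam hlam
    have := hΓconv.sum_mem (t := (Finset.univ : Finset (Fin m)))
      (w := fun _ => (m : ℝ)⁻¹) (z := fun k => (fun i => lam (i + k)))
      (fun k _ => by positivity)
      (by simp [Finset.sum_const, Finset.card_univ]
          try field_simp)
      (fun k _ => hmem k)
    convert this using 1
    funext i
    simp only [Finset.sum_apply, Pi.smul_apply, smul_eq_mul]
    rw [← Finset.mul_sum]
    have : ∑ k : Fin m, lam (i + k) = ∑ j, lam j := Equiv.sum_comp (Equiv.addLeft i) lam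
    rw [this, hs]
    have hmne : (m:ℝ) ≠ 0 := by positivity
    field_simp
  clear_value s
  -- derive Γ = univ, contradiction
  apply hΓproper
  ext x
  simp only [Set.mem_univ, iff_true]
  rcases lt_or_eq_of_le hsle with hslt | hseq
  · -- s < 0 : x = (x - t • a) + t • a with x - t • a in positive cone
    set t : ℝ := (1 + ∑ i, |x i|) / (-s) with ht
    have htpos : 0 < t := by
      apply div_pos
      · have : (0:ℝ) ≤ ∑ i, |x i| := Finset.sum_nonneg fun i _ => abs_nonneg _
        linarith
      · linarith
    have hsne : s ≠ 0 := ne_of_lt hslt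
    have hts : t * s = -(1 + ∑ i, |x i|) := by
      rw [ht]; field_simp
    have hmem1 : (fun i => x i - t * s) ∈ Γ := by
      apply hΓpos
      intro i
      simp only [Set.mem_setOf_eq, hts]
      have h1 : |x i| ≤ ∑ j, |x j| :=
        Finset.single_le_sum (fun j _ => abs_nonneg (x j)) (Finset.mem_univ i)
      have h2 : -x i ≤ |x i| := neg_le_abs _
      linarith
    have hmem2 : (t • (fun _ : Fin m => s)) ∈ Γ := hΓcone t htpos _ ha
    have := hadd _ hmem1 _ hmem2
    have hx : (fun i => x i - t * s) + t • (fun _ : Fin m => s) = x := by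
      funext i; simp [Pi.smul_apply, smul_eq_mul]
    rwa [hx] at this
  · -- s = 0 : 0 ∈ Γ, Γ open, use cone
    have h0 : (0 : Fin m → ℝ) ∈ Γ := by
      have : (fun _ : Fin m => s) = (0 : Fin m → ℝ) := by funext i; simp [← hseq]
      rwa [this] at ha
    rcases Metric.isOpen_iff.1 hΓopen 0 h0 with ⟨ε, hε, hball⟩
    set t : ℝ := ε / (2 * (‖x‖ + 1)) with ht
    have hnx : (0:ℝ) < ‖x‖ + 1 := by positivity
    have htpos : 0 < t := by positivity
    have hmem : t • x ∈ Γ := by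
      apply hball
      simp only [Metric.mem_ball, dist_zero_right, norm_smul, Real.norm_eq_abs,
        abs_of_pos htpos]
      calc t * ‖x‖ ≤ t * (‖x‖ + 1) := by nlinarith
        _ = ε / 2 := by rw [ht]; field_simp
        _ < ε := by linarith
    have := hΓcone t⁻¹ (by positivity) _ hmem
    rwa [smul_smul, inv_mul_cancel₀ (ne_of_gt htpos), one_smul] at this

/-- inequality (6.10): if `β ∈ (0,1]`, `λ ∈ Γ`, `λ_r < 0` and
`fᵢ(λ) ≥ β ∑ⱼ fⱼ(λ)` for every `i`, then
`f_r λ_r² ≤ ((m-1)/β) ∑_{i≠r} fᵢλᵢ²`. -/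
theorem stmt_8 (m : ℕ) (hm : 2 ≤ m)
    (Γ : Set (Fin m → ℝ)) (f : (Fin m → ℝ) → ℝ)
    (hΓopen : IsOpen Γ) (hΓconv : Convex ℝ Γ) (hΓne : Γ.Nonempty)
    (hΓproper : Γ ≠ Set.univ)
    (hΓcone : ∀ t : ℝ, 0 < t → ∀ x ∈ Γ, t • x ∈ Γ)
    (hΓperm : ∀ π : Equiv.Perm (Fin m), ∀ x ∈ Γ, x ∘ π ∈ Γ)
    (hΓpos : {x : Fin m → ℝ | ∀ i, 0 < x i} ⊆ Γ)
    (hfsmooth : ContDiffOn ℝ (⊤ : ℕ∞) f Γ)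
    (hfsymm : ∀ π : Equiv.Perm (Fin m), ∀ x ∈ Γ, f (x ∘ π) = f x)
    (hf1 : ∀ x ∈ Γ, ∀ i, 0 < pd f x i)
    (hf2 : ConcaveOn ℝ Γ f)
    (β : ℝ) (hβ : 0 < β) (hβ' : β ≤ 1)
    (lam : Fin m → ℝ) (hlam : lam ∈ Γ)
    (r : Fin m) (hr : lam r < 0)
    (hf : ∀ i, β * ∑ j, pd f lam j ≤ pd f lam i) :
    pd f lam r * (lam r) ^ 2
      ≤ (((m : ℝ) - 1) / β) * ∑ i ∈ Finset.univ.erase r, pd f lam i * (lam i) ^ 2 := by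
  set F : Fin m → ℝ := pd f lam with hF
  set E : Finset (Fin m) := Finset.univ.erase r with hE
  have hFpos : ∀ i, 0 < F i := hf1 lam hlam
  have hsum : 0 < ∑ i, lam i :=
    sum_pos_of_mem_cone m hm Γ hΓopen hΓconv hΓproper hΓcone hΓperm hΓpos lam hlam
  have hsplit : (∑ i ∈ E, lam i) + lam r = ∑ i, lam i :=
    Finset.sum_erase_add Finset.univ lam (Finset.mem_univ r)
  have hS : -lam r < ∑ i ∈ E, lam i := by linarith
  -- square and Cauchy-Schwarz
  have h1 : (lam r) ^ 2 ≤ (∑ i ∈ E, lam i) ^ 2 :=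
    sq_le_sq' (by linarith) (by linarith)
  have hcard : (E.card : ℝ) = (m : ℝ) - 1 := by
    rw [hE, Finset.card_erase_of_mem (Finset.mem_univ r), Finset.card_univ,
      Fintype.card_fin]
    have : 1 ≤ m := by omega
    push_cast [Nat.cast_sub this]
    ring
  have h2 : (∑ i ∈ E, lam i) ^ 2 ≤ ((m : ℝ) - 1) * ∑ i ∈ E, (lam i) ^ 2 := by
    have := sq_sum_le_card_mul_sum_sq (s := E) (f := lam)
    calc (∑ i ∈ E, lam i) ^ 2 ≤ (E.card : ℝ) * ∑ i ∈ E, (lam i) ^ 2 := by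
          exact_mod_cast this
      _ = ((m : ℝ) - 1) * ∑ i ∈ E, (lam i) ^ 2 := by rw [hcard]
  -- β F r ≤ F i
  have h3 : ∀ i, β * F r ≤ F i := by
    intro i
    have hle : F r ≤ ∑ j, F j :=
      Finset.single_le_sum (fun j _ => (hFpos j).le) (Finset.mem_univ r)
    have := hf i
    nlinarith [hFpos r]
  have h4 : ∀ i ∈ E, F r * (lam i) ^ 2 ≤ β⁻¹ * (F i * (lam i) ^ 2) := by
    intro i _
    rw [← mul_assoc]
    have hb : F r ≤ β⁻¹ * F i := by
      rw [inv_mul_eq_div, le_div_iff₀ hβ]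
      linarith [h3 i]
    exact mul_le_mul_of_nonneg_right hb (sq_nonneg _)
  have hm1 : (0:ℝ) ≤ (m : ℝ) - 1 := by
    have : (2:ℝ) ≤ (m:ℝ) := by exact_mod_cast hm
    linarith
  calc F r * (lam r) ^ 2
      ≤ F r * (((m : ℝ) - 1) * ∑ i ∈ E, (lam i) ^ 2) :=
        mul_le_mul_of_nonneg_left (h1.trans h2) (hFpos r).le
    _ = ((m : ℝ) - 1) * ∑ i ∈ E, F r * (lam i) ^ 2 := by
        rw [Finset.mul_sum, Finset.mul_sum, Finset.mul_sum]
        exact Finset.sum_congr rfl fun i _ => by ring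
    _ ≤ ((m : ℝ) - 1) * ∑ i ∈ E, β⁻¹ * (F i * (lam i) ^ 2) :=
        mul_le_mul_of_nonneg_left (Finset.sum_le_sum h4) hm1
    _ = (((m : ℝ) - 1) / β) * ∑ i ∈ E, F i * (lam i) ^ 2 := by
        rw [← Finset.mul_sum, div_eq_mul_inv]
        ring
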